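/- Let H be an entropy, with maximal extension D̄_H and minimal extension D̲_H. Then: (i) for every n ∈ ℕ and p ∈ P(n): D̄_H(p‖u_n) = D̲_H(p‖u_n) = log n − H(p); (ii) if 𝔻 is any monotone divergence satisfying 𝔻(p‖u_n) = log n − H(p) for all n ∈ ℕ and all p ∈ P(n), then D̲_H(p‖q) ≤ 𝔻(p‖q) ≤ D̄_H(p‖q) for all n ∈ ℕ and p,q ∈ P(n). -/

import Mathlib

open scoped BigOperators ENNReal

/-- A probability vector: nonnegative entries summing to 1. -/
def IsProbVec {n : ℕ} (p : Fin n → ℝ) : Prop :=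
  (∀ i, 0 ≤ p i) ∧ ∑ i, p i = 1

/-- The uniform probability vector on `n` outcomes. -/
noncomputable def uniform (n : ℕ) : Fin n → ℝ := fun _ => (n : ℝ)⁻¹

/-- Kronecker (tensor) product of two vectors. -/
noncomputable def kron {n m : ℕ} (p : Fin n → ℝ) (q : Fin m → ℝ) : Fin (n * m) → ℝ :=
  fun i => p (finProdFinEquiv.symm i).1 * q (finProdFinEquiv.symm i).2

/-- Sum of the `k` largest entries (for vectors with nonnegative entries):
the supremum of sums over subsets of at most `k` indices. -/
noncomputable def maxPartialSum {n : ℕ} (p : Fin n → ℝ) (k : ℕ) : ℝ :=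
  sSup { x | ∃ s : Finset (Fin n), s.card ≤ k ∧ ∑ i ∈ s, p i = x }

/-- `p` majorises `q`: every partial sum of the `k` largest entries of `p`
dominates that of `q` (entries beyond a vector's length count as 0). -/
def Majorizes {n m : ℕ} (p : Fin n → ℝ) (q : Fin m → ℝ) : Prop :=
  ∀ k : ℕ, maxPartialSum q k ≤ maxPartialSum p k

/-- A channel: an `n × m` row-stochastic matrix. -/
def IsStochastic {n m : ℕ} (W : Matrix (Fin n) (Fin m) ℝ) : Prop :=
  (∀ i j, 0 ≤ W i j) ∧ ∀ i, ∑ j, W i j = 1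

/-- Relative majorisation of pairs: some channel maps `(p, q)` to `(p', q')`. -/
def RelMaj {n m : ℕ} (p q : Fin n → ℝ) (p' q' : Fin m → ℝ) : Prop :=
  ∃ W : Matrix (Fin n) (Fin m) ℝ, IsStochastic W ∧
    Matrix.vecMul p W = p' ∧ Matrix.vecMul q W = q'

/-- An entropy: a `[0,∞)`-valued function on probability vectors of all finite dimensions
that is monotone under mixing (majorisation), additive for Kronecker products,
and normalised so that `H(u₂) = log 2` (binary logarithm). -/
structure IsEntropy (H : (n : ℕ) → (Fin n → ℝ) → ℝ) : Prop where
  nonneg : ∀ {n : ℕ} (p : Fin n → ℝ), IsProbVec p → 0 ≤ H n p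
  mono : ∀ {n m : ℕ} (p : Fin n → ℝ) (p' : Fin m → ℝ),
    IsProbVec p → IsProbVec p' → Majorizes p p' → H n p ≤ H m p'
  additive : ∀ {n m : ℕ} (p : Fin n → ℝ) (q : Fin m → ℝ),
    IsProbVec p → IsProbVec q → H (n * m) (kron p q) = H n p + H m q
  normalized : H 2 (uniform 2) = Real.logb 2 2

/-- A monotone divergence: a `[0,∞]`-valued function on pairs of probability vectors of
equal finite dimension satisfying the data-processing inequality and `𝔻(1‖1) = 0`. -/
structure IsMonotoneDivergence (D : (n : ℕ) → (Fin n → ℝ) → (Fin n → ℝ) → ℝ≥0∞) : Prop where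
  dpi : ∀ {n m : ℕ} (p q : Fin n → ℝ) (p' q' : Fin m → ℝ),
    IsProbVec p → IsProbVec q → IsProbVec p' → IsProbVec q' →
    RelMaj p q p' q' → D m p' q' ≤ D n p q
  normalized : D 1 (fun _ => 1) (fun _ => 1) = 0

/-- A relative entropy: data-processing inequality, additivity for Kronecker products,
and the normalisation `𝔻(e₁‖u₂) = log 2` (binary logarithm). -/
structure IsRelativeEntropy (D : (n : ℕ) → (Fin n → ℝ) → (Fin n → ℝ) → ℝ≥0∞) : Prop where
  dpi : ∀ {n m : ℕ} (p q : Fin n → ℝ) (p' q' : Fin m → ℝ),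
    IsProbVec p → IsProbVec q → IsProbVec p' → IsProbVec q' →
    RelMaj p q p' q' → D m p' q' ≤ D n p q
  additive : ∀ {n m : ℕ} (p₁ q₁ : Fin n → ℝ) (p₂ q₂ : Fin m → ℝ),
    IsProbVec p₁ → IsProbVec q₁ → IsProbVec p₂ → IsProbVec q₂ →
    D (n * m) (kron p₁ p₂) (kron q₁ q₂) = D n p₁ q₁ + D m p₂ q₂
  normalized : D 2 ![1, 0] ![1/2, 1/2] = ENNReal.ofReal (Real.logb 2 2)

/-- The maximal extension of an entropy `H`:
`D̄_H(p‖q) := inf { log k − H(r) : k ∈ ℕ, r ∈ P(k), (r, u_k) ≽ (p, q) }`. -/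
noncomputable def DmaxExt (H : (n : ℕ) → (Fin n → ℝ) → ℝ) :
    (n : ℕ) → (Fin n → ℝ) → (Fin n → ℝ) → ℝ≥0∞ :=
  fun _ p q => ⨅ (k : ℕ) (r : Fin k → ℝ) (_ : IsProbVec r)
    (_ : RelMaj r (uniform k) p q), ENNReal.ofReal (Real.logb 2 k - H k r)

/-- The minimal extension of an entropy `H`:
`D̲_H(p‖q) := sup { log k − H(r) : k ∈ ℕ, r ∈ P(k), (p, q) ≽ (r, u_k) }`. -/
noncomputable def DminExt (H : (n : ℕ) → (Fin n → ℝ) → ℝ) :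
    (n : ℕ) → (Fin n → ℝ) → (Fin n → ℝ) → ℝ≥0∞ :=
  fun _ p q => ⨆ (k : ℕ) (r : Fin k → ℝ) (_ : IsProbVec r)
    (_ : RelMaj p q r (uniform k)), ENNReal.ofReal (Real.logb 2 k - H k r)

lemma mps_bdd {n : ℕ} (p : Fin n → ℝ) (hp : ∀ i, 0 ≤ p i) (k : ℕ) :
    BddAbove { x | ∃ s : Finset (Fin n), s.card ≤ k ∧ ∑ i ∈ s, p i = x } := by
  refine ⟨∑ i, p i, ?_⟩
  rintro x ⟨s, _, rfl⟩
  exact Finset.sum_le_sum_of_subset_of_nonneg (Finset.subset_univ s) (fun i _ _ => hp i)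

lemma le_mps {n : ℕ} (p : Fin n → ℝ) (hp : ∀ i, 0 ≤ p i) (k : ℕ)
    (s : Finset (Fin n)) (hs : s.card ≤ k) : ∑ i ∈ s, p i ≤ maxPartialSum p k :=
  le_csSup (mps_bdd p hp k) ⟨s, hs, rfl⟩

lemma mps_nonneg {n : ℕ} (p : Fin n → ℝ) (hp : ∀ i, 0 ≤ p i) (k : ℕ) :
    0 ≤ maxPartialSum p k := by
  simpa using le_mps p hp k ∅ (by simp)

lemma mps_le {n : ℕ} (p : Fin n → ℝ) (k : ℕ) (c : ℝ)
    (h : ∀ s : Finset (Fin n), s.card ≤ k → ∑ i ∈ s, p i ≤ c) :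
    maxPartialSum p k ≤ c := by
  have h0 : (0:ℝ) ∈ { x | ∃ s : Finset (Fin n), s.card ≤ k ∧ ∑ i ∈ s, p i = x } :=
    ⟨∅, by simp⟩
  apply csSup_le ⟨0, h0⟩
  rintro x ⟨s, hs, rfl⟩
  exact h s hs

lemma exists_topK {n K : ℕ} (x : Fin n → ℝ) (hK : K ≤ n) :
    ∃ S : Finset (Fin n), S.card = K ∧ ∀ i ∉ S, ∀ j ∈ S, x i ≤ x j := by
  classical
  obtain ⟨S0, -, hc0⟩ := Finset.exists_subset_card_eq
    (show K ≤ (Finset.univ : Finset (Fin n)).card by simpa using hK)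
  obtain ⟨S, hS, hmax⟩ := Finset.exists_max_image
    ((Finset.univ : Finset (Finset (Fin n))).filter fun s => s.card = K)
    (fun s => ∑ i ∈ s, x i) ⟨S0, by simp [hc0]⟩
  have hcard : S.card = K := (Finset.mem_filter.1 hS).2
  refine ⟨S, hcard, ?_⟩
  intro i hi j hj
  by_contra hlt
  push_neg at hlt
  have hij : i ∉ S.erase j := fun h => hi (Finset.mem_of_mem_erase h)
  have hKpos : 0 < K := hcard ▸ Finset.card_pos.2 ⟨j, hj⟩
  have hcard' : (insert i (S.erase j)).card = K := by
    rw [Finset.card_insert_of_notMem hij, Finset.card_erase_of_mem hj, hcard]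
    omega
  have hsum : ∑ a ∈ insert i (S.erase j), x a = x i + (∑ a ∈ S, x a - x j) := by
    rw [Finset.sum_insert hij, Finset.sum_erase_eq_sub hj]
  have := hmax (insert i (S.erase j)) (by simp [hcard'])
  rw [hsum] at this
  linarith

lemma sum_mul_le_mps {n K : ℕ} (x t : Fin n → ℝ) (hx : ∀ i, 0 ≤ x i)
    (ht0 : ∀ i, 0 ≤ t i) (ht1 : ∀ i, t i ≤ 1) (hts : ∑ i, t i ≤ K) :
    ∑ i, x i * t i ≤ maxPartialSum x K := by
  rcases le_or_gt n K with h | h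
  · calc ∑ i, x i * t i ≤ ∑ i, x i :=
          Finset.sum_le_sum fun i _ => by nlinarith [hx i, ht0 i, ht1 i]
      _ ≤ maxPartialSum x K := le_mps x hx K Finset.univ (by simpa using h)
  · rcases Nat.eq_zero_or_pos K with rfl | hK
    · have ht : ∀ i, t i = 0 := by
        intro i
        have h1 : ∑ i, t i ≤ 0 := by simpa using hts
        have h2 : ∀ j ∈ Finset.univ, 0 ≤ t j := fun j _ => ht0 j
        have := (Finset.sum_eq_zero_iff_of_nonneg h2).1 (le_antisymm h1 (Finset.sum_nonneg h2))
        exact this i (Finset.mem_univ i)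
      have : ∑ i, x i * t i = 0 := by simp [ht]
      rw [this]; exact mps_nonneg x hx 0
    · obtain ⟨S, hcard, htop⟩ := exists_topK x h.le
      have hSne : S.Nonempty := Finset.card_pos.1 (hcard ▸ hK)
      set θ := S.inf' hSne x with hθ
      have hθ0 : 0 ≤ θ := Finset.le_inf' hSne x fun j _ => hx j
      have key : ∀ i, x i * t i ≤ max (x i - θ) 0 + θ * t i := by
        intro i
        rcases le_or_gt θ (x i) with h' | h'
        · have hm : max (x i - θ) 0 = x i - θ := max_eq_left (by linarith)
          nlinarith [ht0 i, ht1 i]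
        · have hm : max (x i - θ) 0 = 0 := max_eq_right (by linarith)
          nlinarith [ht0 i]
      have houtside : ∀ i ∈ Finset.univ, i ∉ S → max (x i - θ) 0 = 0 := by
        intro i _ hi
        have : x i ≤ θ := Finset.le_inf' hSne x fun j hj => htop i hi j hj
        exact max_eq_right (by linarith)
      have hmaxsum : ∑ i, max (x i - θ) 0 = ∑ i ∈ S, x i - K * θ := by
        rw [← Finset.sum_subset (Finset.subset_univ S) houtside]
        have : ∀ i ∈ S, max (x i - θ) 0 = x i - θ := by
          intro i hi
          exact max_eq_left (by linarith [Finset.inf'_le x hi])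
        rw [Finset.sum_congr rfl this, Finset.sum_sub_distrib, Finset.sum_const, hcard]
        ring
      calc ∑ i, x i * t i ≤ ∑ i, (max (x i - θ) 0 + θ * t i) :=
            Finset.sum_le_sum fun i _ => key i
        _ = ∑ i, max (x i - θ) 0 + θ * ∑ i, t i := by
            rw [Finset.sum_add_distrib, Finset.mul_sum]
        _ ≤ ∑ i, max (x i - θ) 0 + θ * K := by
            have := mul_le_mul_of_nonneg_left hts hθ0
            linarith
        _ = ∑ i ∈ S, x i := by rw [hmaxsum]; ring
        _ ≤ maxPartialSum x K := le_mps x hx K S (by omega)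

lemma majorizes_vecMul {N M : ℕ} (x : Fin N → ℝ) (hx : ∀ i, 0 ≤ x i)
    (V : Matrix (Fin N) (Fin M) ℝ) (hV0 : ∀ i j, 0 ≤ V i j)
    (hVr : ∀ i, ∑ j, V i j = 1) (hVc : ∀ j, ∑ i, V i j = 1) :
    Majorizes x (Matrix.vecMul x V) := by
  intro K
  apply mps_le
  intro s hs
  have hrw : ∑ j ∈ s, Matrix.vecMul x V j = ∑ i, x i * (∑ j ∈ s, V i j) := by
    simp only [Matrix.vecMul, dotProduct, Finset.mul_sum]
    rw [Finset.sum_comm]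
  rw [hrw]
  apply sum_mul_le_mps x _ hx
  · intro i; exact Finset.sum_nonneg fun j _ => hV0 i j
  · intro i
    calc ∑ j ∈ s, V i j ≤ ∑ j, V i j :=
          Finset.sum_le_sum_of_subset_of_nonneg (Finset.subset_univ s) (fun j _ _ => hV0 i j)
      _ = 1 := hVr i
  · rw [show ∑ i, ∑ j ∈ s, V i j = ∑ j ∈ s, ∑ i, V i j from Finset.sum_comm]
    calc ∑ j ∈ s, ∑ i, V i j = ∑ j ∈ s, (1:ℝ) := Finset.sum_congr rfl fun j _ => hVc j
      _ = s.card := by simp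
      _ ≤ K := by exact_mod_cast hs

lemma sum_fin_mul {n m : ℕ} (F : Fin (n * m) → ℝ) :
    ∑ i, F i = ∑ a : Fin n, ∑ b : Fin m, F (finProdFinEquiv (a, b)) := by
  rw [← Equiv.sum_comp finProdFinEquiv F, Fintype.sum_prod_type]

lemma kron_apply' {n m : ℕ} (p : Fin n → ℝ) (q : Fin m → ℝ) (a : Fin n) (b : Fin m) :
    kron p q (finProdFinEquiv (a, b)) = p a * q b := by
  simp [kron]

lemma sum_kron {n m : ℕ} (p : Fin n → ℝ) (q : Fin m → ℝ) :
    ∑ i, kron p q i = (∑ a, p a) * (∑ b, q b) := by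
  rw [sum_fin_mul]
  simp only [kron_apply']
  rw [Finset.sum_mul_sum]

lemma probVec_kron {n m : ℕ} {p : Fin n → ℝ} {q : Fin m → ℝ}
    (hp : IsProbVec p) (hq : IsProbVec q) : IsProbVec (kron p q) := by
  constructor
  · intro i; exact mul_nonneg (hp.1 _) (hq.1 _)
  · rw [sum_kron, hp.2, hq.2]; norm_num

lemma probVec_uniform {n : ℕ} (hn : 0 < n) : IsProbVec (uniform n) := by
  constructor
  · intro i; simp only [uniform]; positivity
  · simp [uniform, Finset.card_univ]
    field_simp

lemma probVec_pos {n : ℕ} {p : Fin n → ℝ} (hp : IsProbVec p) : 0 < n := by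
  by_contra h
  push_neg at h
  interval_cases n
  have := hp.2
  simp at this

lemma key_major {α β : ℕ} (x : Fin α → ℝ) (y : Fin β → ℝ)
    (hx : IsProbVec x) (hα : 0 < α) (hβ : 0 < β)
    (hrel : RelMaj x (uniform α) y (uniform β)) :
    Majorizes (kron x (uniform β)) (kron y (uniform α)) := by
  obtain ⟨W, ⟨hW0, hWr⟩, hxW, huW⟩ := hrel
  have hα0 : (α : ℝ) ≠ 0 := Nat.cast_ne_zero.2 hα.ne'
  have hβ0 : (β : ℝ) ≠ 0 := Nat.cast_ne_zero.2 hβ.ne'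
  set V : Matrix (Fin (α * β)) (Fin (β * α)) ℝ :=
    fun i j => W (finProdFinEquiv.symm i).1 (finProdFinEquiv.symm j).1 / α with hV
  have hcol : ∀ c : Fin β, ∑ a, W a c = (α : ℝ) / β := by
    intro c
    have := congrFun huW c
    simp only [Matrix.vecMul, dotProduct, uniform] at this
    rw [← Finset.mul_sum] at this
    field_simp at this ⊢
    linarith
  have hrow : ∀ (i : Fin (α * β)), ∑ j, V i j = 1 := by
    intro i
    rw [sum_fin_mul (fun j => V i j)]
    simp only [hV, Equiv.symm_apply_apply]
    calc ∑ c : Fin β, ∑ _d : Fin α, W (finProdFinEquiv.symm i).1 c / (α:ℝ)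
        = ∑ c : Fin β, W (finProdFinEquiv.symm i).1 c := by
          refine Finset.sum_congr rfl fun c _ => ?_
          rw [Finset.sum_const, Finset.card_univ, Fintype.card_fin, nsmul_eq_mul]
          field_simp
      _ = 1 := hWr _
  have hcolV : ∀ (j : Fin (β * α)), ∑ i, V i j = 1 := by
    intro j
    rw [sum_fin_mul (fun i => V i j)]
    simp only [hV, Equiv.symm_apply_apply]
    calc ∑ a : Fin α, ∑ _b : Fin β, W a (finProdFinEquiv.symm j).1 / (α:ℝ)
        = ∑ a : Fin α, (β:ℝ) * (W a (finProdFinEquiv.symm j).1 / (α:ℝ)) := by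
          refine Finset.sum_congr rfl fun a _ => ?_
          rw [Finset.sum_const, Finset.card_univ, Fintype.card_fin, nsmul_eq_mul]
      _ = (β:ℝ) * ((∑ a, W a (finProdFinEquiv.symm j).1) / (α:ℝ)) := by
          rw [Finset.sum_div, Finset.mul_sum]
      _ = 1 := by rw [hcol]; field_simp
  have hy : ∀ c : Fin β, ∑ a, x a * W a c = y c := by
    intro c
    have := congrFun hxW c
    simpa [Matrix.vecMul, dotProduct] using this
  have hmul : Matrix.vecMul (kron x (uniform β)) V = kron y (uniform α) := by
    funext j
    have h0 : Matrix.vecMul (kron x (uniform β)) V j = ∑ i, kron x (uniform β) i * V i j := by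
      simp [Matrix.vecMul, dotProduct]
    have h1 : kron y (uniform α) j = y (finProdFinEquiv.symm j).1 * (α:ℝ)⁻¹ := by
      simp [kron, uniform]
    rw [h0, h1, sum_fin_mul (fun i => kron x (uniform β) i * V i j)]
    simp only [hV, kron_apply', Equiv.symm_apply_apply, uniform]
    calc ∑ a : Fin α, ∑ _b : Fin β, x a * (β:ℝ)⁻¹ * (W a (finProdFinEquiv.symm j).1 / (α:ℝ))
        = ∑ a : Fin α, (x a * W a (finProdFinEquiv.symm j).1) * (α:ℝ)⁻¹ := by
          refine Finset.sum_congr rfl fun a _ => ?_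
          rw [Finset.sum_const, Finset.card_univ, Fintype.card_fin, nsmul_eq_mul]
          field_simp
      _ = y (finProdFinEquiv.symm j).1 * (α:ℝ)⁻¹ := by rw [← Finset.sum_mul, hy]
  rw [← hmul]
  apply majorizes_vecMul
  · intro i; exact mul_nonneg (hx.1 _) (by simp only [uniform]; positivity)
  · intro i j; exact div_nonneg (hW0 _ _) (by positivity)
  · exact hrow
  · exact hcolV

lemma mps_uniform {m : ℕ} (hm : 0 < m) (k : ℕ) :
    maxPartialSum (uniform m) k = (min k m : ℕ) / m := by
  have hm0 : (m : ℝ) ≠ 0 := Nat.cast_ne_zero.2 hm.ne'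
  have hnn : ∀ i : Fin m, 0 ≤ uniform m i := fun i => by simp only [uniform]; positivity
  apply le_antisymm
  · apply mps_le
    intro s hs
    have hsum : ∑ i ∈ s, uniform m i = (s.card : ℝ) / m := by
      simp [uniform, Finset.sum_const, div_eq_mul_inv]
    rw [hsum]
    apply div_le_div_of_nonneg_right ?_ (by positivity)
    have hcm : s.card ≤ min k m := le_min hs (le_trans (Finset.card_le_univ s) (by simp))
    exact_mod_cast hcm
  · obtain ⟨s, -, hcard⟩ := Finset.exists_subset_card_eq
      (show min k m ≤ (Finset.univ : Finset (Fin m)).card by simp)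
    have hsum : ∑ i ∈ s, uniform m i = ((min k m : ℕ) : ℝ) / m := by
      simp [uniform, Finset.sum_const, hcard, div_eq_mul_inv]
    rw [← hsum]
    exact le_mps _ hnn k s (by omega)

lemma majorizes_uniform {a b : ℕ} (ha : 0 < a) (hab : a ≤ b) :
    Majorizes (uniform a) (uniform b) := by
  have hb : 0 < b := lt_of_lt_of_le ha hab
  intro k
  rw [mps_uniform ha, mps_uniform hb]
  rcases le_or_gt k a with h | h
  · rw [min_eq_left h, min_eq_left (le_trans h hab)]
    apply div_le_div_of_nonneg_left (by positivity) (by exact_mod_cast ha) (by exact_mod_cast hab)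
  · rw [min_eq_right h.le]
    have h1 : ((min k b : ℕ) : ℝ) / b ≤ 1 := by
      apply div_le_one_of_le₀
      · exact_mod_cast min_le_right k b
      · positivity
    have h2 : ((a : ℕ) : ℝ) / a = 1 := by
      field_simp
    rw [h2]; exact h1

lemma kron_uniform (n m : ℕ) : kron (uniform n) (uniform m) = uniform (n * m) := by
  funext i
  simp [kron, uniform, mul_inv, mul_comm]

lemma real_le_of_forall_inv {x y : ℝ} (h : ∀ m : ℕ, 0 < m → x ≤ y + 1 / m) : x ≤ y := by
  by_contra h'
  push_neg at h'
  obtain ⟨m, hm⟩ := exists_nat_gt (1 / (x - y))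
  have hxy : 0 < x - y := sub_pos.2 h'
  have hm0 : 0 < m := by
    have h1 : (0:ℝ) < 1 / (x - y) := by positivity
    exact_mod_cast h1.trans hm
  have hmr : (0:ℝ) < m := by exact_mod_cast hm0
  rw [div_lt_iff₀ hxy] at hm
  have h2 : 1 / (m:ℝ) < x - y := by
    rw [div_lt_iff₀ hmr]
    nlinarith
  linarith [h m hm0]

section EntropyUniform

variable {H : (n : ℕ) → (Fin n → ℝ) → ℝ}

lemma Hu_one (hH : IsEntropy H) : H 1 (uniform 1) = 0 := by
  have hpv : IsProbVec (uniform 1) := probVec_uniform one_pos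
  have hadd := hH.additive (uniform 1) (uniform 1) hpv hpv
  have h : kron (uniform 1) (uniform 1) = uniform 1 := by
    funext i; simp [kron, uniform]
  rw [h] at hadd
  have h2 : H (1 * 1) (uniform 1) = H 1 (uniform 1) := rfl
  rw [h2] at hadd
  linarith

lemma Hu_mul (hH : IsEntropy H) {n m : ℕ} (hn : 0 < n) (hm : 0 < m) :
    H (n * m) (uniform (n * m)) = H n (uniform n) + H m (uniform m) := by
  rw [← kron_uniform]
  exact hH.additive _ _ (probVec_uniform hn) (probVec_uniform hm)

lemma Hu_pow (hH : IsEntropy H) {n : ℕ} (hn : 0 < n) (a : ℕ) :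
    H (n ^ a) (uniform (n ^ a)) = a * H n (uniform n) := by
  induction a with
  | zero => rw [pow_zero, Hu_one hH]; simp
  | succ a ih =>
      rw [pow_succ, Hu_mul hH (pow_pos hn a) hn, ih]
      push_cast; ring

lemma Hu_mono (hH : IsEntropy H) {a b : ℕ} (ha : 0 < a) (hab : a ≤ b) :
    H a (uniform a) ≤ H b (uniform b) :=
  hH.mono _ _ (probVec_uniform ha) (probVec_uniform (lt_of_lt_of_le ha hab))
    (majorizes_uniform ha hab)

lemma Hu_pow2 (hH : IsEntropy H) (a : ℕ) : H (2 ^ a) (uniform (2 ^ a)) = a := by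
  rw [Hu_pow hH two_pos a, hH.normalized, Real.logb_self_eq_one (by norm_num)]
  ring

lemma Hu_eq_logb (hH : IsEntropy H) {n : ℕ} (hn : 0 < n) :
    H n (uniform n) = Real.logb 2 n := by
  set L := Real.logb 2 n with hL
  have hn1 : (1:ℝ) ≤ n := by exact_mod_cast hn
  have hL0 : 0 ≤ L := Real.logb_nonneg (by norm_num) hn1
  have hnm2 : ∀ m : ℕ, Real.logb 2 ((n:ℝ) ^ m) = m * L := fun m => Real.logb_pow 2 (n:ℝ) m
  apply le_antisymm
  · apply real_le_of_forall_inv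
    intro m hm
    have hmr : (0:ℝ) < m := by exact_mod_cast hm
    set b := ⌈(m:ℝ) * L⌉₊ with hb
    have hpow : n ^ m ≤ 2 ^ b := by
      have hnmpos : (0:ℝ) < (n:ℝ) ^ m := by positivity
      have h1 : ((n:ℝ)) ^ m ≤ (2:ℝ) ^ (b:ℕ) := by
        have he : ((n:ℝ)) ^ m = (2:ℝ) ^ ((m:ℝ) * L) := by
          rw [← hnm2 m]
          exact (Real.rpow_logb two_pos (by norm_num) hnmpos).symm
        rw [he, ← Real.rpow_natCast 2 b]
        exact Real.rpow_le_rpow_of_exponent_le one_le_two (Nat.le_ceil _)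
      exact_mod_cast h1
    have e1 := Hu_pow hH hn m
    have e2 := Hu_pow2 hH b
    have hmono := Hu_mono hH (pow_pos hn m) hpow
    have hb1 : (b:ℝ) < (m:ℝ) * L + 1 := Nat.ceil_lt_add_one (by positivity)
    have h3 : (m:ℝ) * H n (uniform n) ≤ (m:ℝ) * (L + 1 / m) := by
      have : (m:ℝ) * (L + 1 / m) = (m:ℝ) * L + 1 := by field_simp
      rw [this]
      calc (m:ℝ) * H n (uniform n) = H (n ^ m) (uniform (n ^ m)) := e1.symm
        _ ≤ H (2 ^ b) (uniform (2 ^ b)) := hmono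
        _ = b := e2
        _ ≤ (m:ℝ) * L + 1 := hb1.le
    exact le_of_mul_le_mul_left h3 hmr
  · apply real_le_of_forall_inv
    intro m hm
    have hmr : (0:ℝ) < m := by exact_mod_cast hm
    set a := ⌊(m:ℝ) * L⌋₊ with ha
    have hpow : 2 ^ a ≤ n ^ m := by
      have hnmpos : (0:ℝ) < (n:ℝ) ^ m := by positivity
      have h1 : (2:ℝ) ^ (a:ℕ) ≤ ((n:ℝ)) ^ m := by
        have he : ((n:ℝ)) ^ m = (2:ℝ) ^ ((m:ℝ) * L) := by
          rw [← hnm2 m]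
          exact (Real.rpow_logb two_pos (by norm_num) hnmpos).symm
        rw [he, ← Real.rpow_natCast 2 a]
        exact Real.rpow_le_rpow_of_exponent_le one_le_two (Nat.floor_le (by positivity))
      exact_mod_cast h1
    have e1 := Hu_pow hH hn m
    have e2 := Hu_pow2 hH a
    have hmono := Hu_mono hH (pow_pos two_pos a) hpow
    have ha1 : (m:ℝ) * L - 1 < (a:ℝ) := Nat.sub_one_lt_floor _
    have h3 : (m:ℝ) * (L - 1 / m) ≤ (m:ℝ) * H n (uniform n) := by
      have : (m:ℝ) * (L - 1 / m) = (m:ℝ) * L - 1 := by field_simp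
      rw [this]
      calc (m:ℝ) * L - 1 ≤ (a:ℝ) := ha1.le
        _ = H (2 ^ a) (uniform (2 ^ a)) := e2.symm
        _ ≤ H (n ^ m) (uniform (n ^ m)) := hmono
        _ = (m:ℝ) * H n (uniform n) := e1
    have := le_of_mul_le_mul_left h3 hmr
    linarith

end EntropyUniform

lemma relMaj_refl {n : ℕ} (p q : Fin n → ℝ) : RelMaj p q p q := by
  refine ⟨1, ⟨?_, ?_⟩, Matrix.vecMul_one p, Matrix.vecMul_one q⟩
  · intro i j
    by_cases h : i = j <;> simp [Matrix.one_apply, h]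
  · intro i
    simp [Matrix.one_apply]

lemma key_ineq {H : (n : ℕ) → (Fin n → ℝ) → ℝ} (hH : IsEntropy H)
    {k n : ℕ} {r : Fin k → ℝ} {p : Fin n → ℝ}
    (hr : IsProbVec r) (hp : IsProbVec p)
    (hrel : RelMaj r (uniform k) p (uniform n)) :
    Real.logb 2 n - H n p ≤ Real.logb 2 k - H k r := by
  have hk := probVec_pos hr
  have hn := probVec_pos hp
  have hmaj := key_major r p hr hk hn hrel
  have hmono := hH.mono _ _ (probVec_kron hr (probVec_uniform hn))
    (probVec_kron hp (probVec_uniform hk)) hmaj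
  rw [hH.additive r (uniform n) hr (probVec_uniform hn),
      hH.additive p (uniform k) hp (probVec_uniform hk)] at hmono
  have h1 := Hu_eq_logb hH hn
  have h2 := Hu_eq_logb hH hk
  linarith

/-- both extensions of an entropy `H` agree with `log n − H(p)` on
`(p ‖ uₙ)`, and any monotone divergence with this property is sandwiched between
`D̲_H` and `D̄_H`. -/
theorem stmt10 (H : (n : ℕ) → (Fin n → ℝ) → ℝ) (hH : IsEntropy H) :
    (∀ (n : ℕ) (p : Fin n → ℝ), IsProbVec p →
      DmaxExt H n p (uniform n) = ENNReal.ofReal (Real.logb 2 n - H n p) ∧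
      DminExt H n p (uniform n) = ENNReal.ofReal (Real.logb 2 n - H n p)) ∧
    ∀ D : (n : ℕ) → (Fin n → ℝ) → (Fin n → ℝ) → ℝ≥0∞, IsMonotoneDivergence D →
      (∀ (n : ℕ) (p : Fin n → ℝ), IsProbVec p →
        D n p (uniform n) = ENNReal.ofReal (Real.logb 2 n - H n p)) →
      ∀ (n : ℕ) (p q : Fin n → ℝ), IsProbVec p → IsProbVec q →
        DminExt H n p q ≤ D n p q ∧ D n p q ≤ DmaxExt H n p q := by
  constructor
  · intro n p hp
    constructor
    · simp only [DmaxExt]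
      apply le_antisymm
      · exact iInf_le_of_le n (iInf_le_of_le p (iInf_le_of_le hp
          (iInf_le_of_le (relMaj_refl p (uniform n)) le_rfl)))
      · apply le_iInf; intro k
        apply le_iInf; intro r
        apply le_iInf; intro hr
        apply le_iInf; intro hrel
        exact ENNReal.ofReal_le_ofReal (key_ineq hH hr hp hrel)
    · simp only [DminExt]
      apply le_antisymm
      · apply iSup_le; intro k
        apply iSup_le; intro r
        apply iSup_le; intro hr
        apply iSup_le; intro hrel
        exact ENNReal.ofReal_le_ofReal (key_ineq hH hp hr hrel)
      · exact le_iSup_of_le n (le_iSup_of_le p (le_iSup_of_le hp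
          (le_iSup_of_le (relMaj_refl p (uniform n)) le_rfl)))
  · intro D hD hDu n p q hp hq
    constructor
    · simp only [DminExt]
      apply iSup_le; intro k
      apply iSup_le; intro r
      apply iSup_le; intro hr
      apply iSup_le; intro hrel
      rw [← hDu k r hr]
      exact hD.dpi p q r (uniform k) hp hq hr (probVec_uniform (probVec_pos hr)) hrel
    · simp only [DmaxExt]
      apply le_iInf; intro k
      apply le_iInf; intro r
      apply le_iInf; intro hr
      apply le_iInf; intro hrel
      rw [← hDu k r hr]
      exact hD.dpi r (uniform k) p q hr (probVec_uniform (probVec_pos hr)) hp hq hrel
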